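/- Fix θ̄ ∈ (0,π/2). Then lim_{k→0⁺} [ 1/2 − (1 − 2·H(2θ(k)|k))/(2·cn(θ(k)|k)) ] = 1/2 − (π − 2θ̄)/(2π·cos θ̄), where θ(k) = θ̄·2K(k)/π. (The left-hand side is the probability, under the dimer Gibbs measure on the Fisher graph, that an edge of rhombus half-angle θ̄ occurs in the high-temperature polygon expansion of the Z-invariant Ising model with modulus k; the right-hand side is the known critical value at k = 0.) -/

import Mathlib

open Real Filter

/-- Complete elliptic integral of the first kind `K`, as a function of the
squared modulus `m = k²`. -/
noncomputable def ellK (m : ℝ) : ℝ :=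
  ∫ τ in (0:ℝ)..(π/2), 1 / Real.sqrt (1 - m * Real.sin τ ^ 2)

/-- The incomplete elliptic integral of the first kind
`φ ↦ ∫₀^φ (1 - k² sin² t)^{-1/2} dt`, as a function of the squared modulus `m = k²`. -/
noncomputable def amF (m φ : ℝ) : ℝ :=
  ∫ t in (0:ℝ)..φ, 1 / Real.sqrt (1 - m * Real.sin t ^ 2)

/-- Jacobi's amplitude, the inverse of `amF m`, squared modulus `m = k²`. -/
noncomputable def am (m u : ℝ) : ℝ := Function.invFun (amF m) u

/-- Jacobi elliptic function `sn`, squared modulus `m = k²`. -/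
noncomputable def sn (u m : ℝ) : ℝ := Real.sin (am m u)

/-- Jacobi elliptic function `cn`, squared modulus `m = k²`. -/
noncomputable def cn (u m : ℝ) : ℝ := Real.cos (am m u)

/-- Jacobi elliptic function `dn`, squared modulus `m = k²`. -/
noncomputable def dn (u m : ℝ) : ℝ := Real.sqrt (1 - m * sn u m ^ 2)

/-- Jacobi elliptic function `sc = sn/cn`, squared modulus `m = k²`. -/
noncomputable def sc (u m : ℝ) : ℝ := sn u m / cn u m

/-- Jacobi's epsilon function `E(u|k) = ∫₀ᵘ dn(v|k)² dv`, squared modulus `m = k²`. -/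
noncomputable def jacobiEps (m u : ℝ) : ℝ := ∫ v in (0:ℝ)..u, (dn v m) ^ 2

/-- The function `H(u|k) = (K'/π)(E(u/2|k) + ((E'-K')/K')·(u/2))`, where
`k' = √(1-k²)`, `K' = K(k')`, `E' = E(K'|k')`. -/
noncomputable def Hh (k u : ℝ) : ℝ :=
  (ellK (1 - k^2) / π) *
    (jacobiEps (k^2) (u/2) +
      ((jacobiEps (1 - k^2) (ellK (1 - k^2)) - ellK (1 - k^2)) / ellK (1 - k^2)) * (u/2))


open MeasureTheory intervalIntegral Topology




section basic
variable {m : ℝ} (hm0 : 0 ≤ m) (hm1 : m < 1)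
include hm0 hm1

lemma den_pos (t : ℝ) : 0 < 1 - m * Real.sin t ^ 2 := by
  nlinarith [Real.sin_sq_le_one t, sq_nonneg (Real.sin t)]

omit hm1 in
lemma den_le_one (t : ℝ) : 1 - m * Real.sin t ^ 2 ≤ 1 := by
  nlinarith [sq_nonneg (Real.sin t)]

omit hm1 in
lemma den_ge (t : ℝ) : 1 - m ≤ 1 - m * Real.sin t ^ 2 := by
  nlinarith [Real.sin_sq_le_one t]

lemma g_cont : Continuous (fun t : ℝ => 1 / Real.sqrt (1 - m * Real.sin t ^ 2)) := by
  apply Continuous.div continuous_const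
  · exact Real.continuous_sqrt.comp (by continuity)
  · intro t
    exact (Real.sqrt_pos.mpr (den_pos hm0 hm1 t)).ne'

lemma g_ge_one (t : ℝ) : 1 ≤  1 / Real.sqrt (1 - m * Real.sin t ^ 2) := by
  have h1 : Real.sqrt (1 - m * Real.sin t ^ 2) ≤ 1 := by
    calc Real.sqrt (1 - m * Real.sin t ^ 2) ≤ Real.sqrt 1 :=
        Real.sqrt_le_sqrt (den_le_one hm0 t)
    _ = 1 := Real.sqrt_one
  have h2 := Real.sqrt_pos.mpr (den_pos hm0 hm1 t)
  rw [le_div_iff₀ h2]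
  linarith

lemma g_le (t : ℝ) : 1 / Real.sqrt (1 - m * Real.sin t ^ 2) ≤ 1 / Real.sqrt (1 - m) := by
  apply one_div_le_one_div_of_le
  · exact Real.sqrt_pos.mpr (by linarith)
  · exact Real.sqrt_le_sqrt (den_ge hm0 t)

end basic

section amf
variable {m : ℝ} (hm0 : 0 ≤ m) (hm1 : m < 1)
include hm0 hm1

lemma g_intble (a b : ℝ) :
    IntervalIntegrable (fun t : ℝ => 1 / Real.sqrt (1 - m * Real.sin t ^ 2)) volume a b :=
  (g_cont hm0 hm1).intervalIntegrable a b

lemma amF_sub (a b : ℝ) :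
    amF m b - amF m a = ∫ t in a..b, 1 / Real.sqrt (1 - m * Real.sin t ^ 2) := by
  have := integral_add_adjacent_intervals (g_intble hm0 hm1 0 a) (g_intble hm0 hm1 a b)
  unfold amF
  linarith

lemma amF_diff_bounds {a b : ℝ} (hab : a ≤ b) :
    b - a ≤ amF m b - amF m a ∧ amF m b - amF m a ≤ (b - a) / Real.sqrt (1 - m) := by
  rw [amF_sub hm0 hm1]
  constructor
  · calc b - a = ∫ _t in a..b, (1:ℝ) := by simp
    _ ≤ _ := by
        apply integral_mono hab (by simp [_root_.intervalIntegrable_const]) (g_intble hm0 hm1 a b)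
        intro t; exact g_ge_one hm0 hm1 t
  · calc (∫ t in a..b, 1 / Real.sqrt (1 - m * Real.sin t ^ 2))
        ≤ ∫ _t in a..b, 1 / Real.sqrt (1 - m) := by
          apply integral_mono hab (g_intble hm0 hm1 a b) (by simp [_root_.intervalIntegrable_const])
          intro t; exact g_le hm0 hm1 t
    _ = (b - a) / Real.sqrt (1 - m) := by simp [div_eq_mul_inv, mul_comm]

lemma amF_strictMono : StrictMono (amF m) := by
  intro a b hab
  have := (amF_diff_bounds hm0 hm1 hab.le).1
  linarith

omit hm0 hm1 in
lemma amF_zero : amF m 0 = 0 := integral_same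

lemma amF_continuous : Continuous (amF m) := by
  unfold amF
  exact intervalIntegral.continuous_primitive (fun a b => g_intble hm0 hm1 a b) 0

lemma amF_surjective : Function.Surjective (amF m) := by
  intro y
  have h1 : amF m (-|y|) ≤ y := by
    have := (amF_diff_bounds hm0 hm1 (neg_nonpos.mpr (abs_nonneg y))).1
    rw [amF_zero] at this
    have := neg_abs_le y
    linarith
  have h2 : y ≤ amF m |y| := by
    have := (amF_diff_bounds hm0 hm1 (abs_nonneg y)).1
    rw [amF_zero] at this
    have := le_abs_self y
    linarith
  have := intermediate_value_Icc (a := -|y|) (b := |y|)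
    (by linarith [abs_nonneg y]) (amF_continuous hm0 hm1).continuousOn
  obtain ⟨x, _, hx⟩ := this ⟨h1, h2⟩
  exact ⟨x, hx⟩

end amf



section am
variable {m : ℝ} (hm0 : 0 ≤ m) (hm1 : m < 1)
include hm0 hm1

lemma amF_am (u : ℝ) : amF m (am m u) = u :=
  Function.invFun_eq (amF_surjective hm0 hm1 u)

lemma am_amF (φ : ℝ) : am m (amF m φ) = φ :=
  Function.leftInverse_invFun (amF_strictMono hm0 hm1).injective φ

lemma am_eq_symm : am m = ⇑(StrictMono.orderIsoOfSurjective (amF m)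
    (amF_strictMono hm0 hm1) (amF_surjective hm0 hm1)).symm := by
  funext u
  apply (amF_strictMono hm0 hm1).injective
  rw [amF_am hm0 hm1]
  exact (StrictMono.orderIsoOfSurjective_self_symm_apply _ _ _ u).symm

lemma am_continuous : Continuous (am m) := by
  rw [am_eq_symm hm0 hm1]
  exact (StrictMono.orderIsoOfSurjective (amF m) (amF_strictMono hm0 hm1)
    (amF_surjective hm0 hm1)).symm.toHomeomorph.continuous

lemma am_bounds {u : ℝ} (hu : 0 ≤ u) :
    Real.sqrt (1 - m) * u ≤ am m u ∧ am m u ≤ u := by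
  set a := am m u with ha
  have hfa : amF m a = u := amF_am hm0 hm1 u
  have ha0 : 0 ≤ a := by
    by_contra h
    push_neg at h
    have := (amF_diff_bounds hm0 hm1 h.le).1
    rw [amF_zero] at this
    linarith
  have hb := amF_diff_bounds hm0 hm1 ha0
  rw [amF_zero, hfa, sub_zero, sub_zero] at hb
  have hs : 0 < Real.sqrt (1 - m) := Real.sqrt_pos.mpr (by linarith)
  constructor
  · rw [mul_comm, ← le_div_iff₀ hs]
    exact hb.2.trans_eq (by ring_nf)
  · linarith [hb.1]

end am

section eps
variable {m : ℝ} (hm0 : 0 ≤ m) (hm1 : m < 1)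
include hm0 hm1

lemma dn_sq (v : ℝ) : dn v m ^ 2 = 1 - m * sn v m ^ 2 := by
  apply Real.sq_sqrt
  have : sn v m ^ 2 ≤ 1 := Real.sin_sq_le_one _
  nlinarith

omit hm1 in
lemma dn_sq_le (v : ℝ) : dn v m ^ 2 ≤ 1 := by
  have : 0 ≤ m * sn v m ^ 2 := mul_nonneg hm0 (sq_nonneg _)
  have h := Real.sqrt_le_sqrt (show 1 - m * sn v m ^ 2 ≤ 1 by linarith)
  unfold dn
  calc Real.sqrt (1 - m * sn v m ^ 2) ^ 2 = Real.sqrt (1 - m * sn v m ^2) * Real.sqrt (1 - m * sn v m ^2) := sq (Real.sqrt _) ▸ by ring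
  _ ≤ 1 * 1 := by
      have h0 : (0:ℝ) ≤ Real.sqrt (1 - m * sn v m ^ 2) := Real.sqrt_nonneg _
      rw [Real.sqrt_one] at h
      nlinarith
  _ = 1 := by ring

lemma dn_sq_ge (v : ℝ) : 1 - m ≤ dn v m ^ 2 := by
  rw [dn_sq hm0 hm1]
  have : sn v m ^ 2 ≤ 1 := Real.sin_sq_le_one _
  nlinarith

lemma dn_sq_cont : Continuous (fun v => dn v m ^ 2) := by
  have h : (fun v => dn v m ^ 2) = fun v => 1 - m * sn v m ^ 2 := by
    funext v; exact dn_sq hm0 hm1 v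
  rw [h]
  unfold sn
  have hc := am_continuous hm0 hm1
  exact continuous_const.sub (continuous_const.mul ((Real.continuous_sin.comp hc).pow 2))

lemma jacobiEps_bounds {u : ℝ} (hu : 0 ≤ u) :
    (1 - m) * u ≤ jacobiEps m u ∧ jacobiEps m u ≤ u := by
  unfold jacobiEps
  have e1 : (∫ _v in (0:ℝ)..u, (1-m)) = (1-m) * u := by simp; ring
  have e2 : (∫ _v in (0:ℝ)..u, (1:ℝ)) = u := by simp
  have h1 : (∫ _v in (0:ℝ)..u, (1-m)) ≤ ∫ v in (0:ℝ)..u, dn v m ^ 2 := by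
    apply integral_mono hu (by simp [_root_.intervalIntegrable_const])
      ((dn_sq_cont hm0 hm1).intervalIntegrable 0 u)
    intro v; exact dn_sq_ge hm0 hm1 v
  have h2 : (∫ v in (0:ℝ)..u, dn v m ^ 2) ≤ ∫ _v in (0:ℝ)..u, (1:ℝ) := by
    apply integral_mono hu ((dn_sq_cont hm0 hm1).intervalIntegrable 0 u)
      (by simp [_root_.intervalIntegrable_const])
    intro v; exact dn_sq_le hm0 v
  rw [e1] at h1
  rw [e2] at h2
  exact ⟨h1, h2⟩

lemma ellK_bounds : π/2 ≤ ellK m ∧ ellK m ≤ (π/2) / Real.sqrt (1 - m) := by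
  have h := amF_diff_bounds hm0 hm1 (le_of_lt (by positivity : (0:ℝ) < π/2))
  rw [amF_zero, sub_zero, sub_zero] at h
  exact h

lemma amF_hasDerivAt (t : ℝ) :
    HasDerivAt (amF m) (1 / Real.sqrt (1 - m * Real.sin t ^ 2)) t := by
  apply intervalIntegral.integral_hasDerivAt_right (g_intble hm0 hm1 0 t)
    ((g_cont hm0 hm1).stronglyMeasurableAtFilter _ _) (g_cont hm0 hm1).continuousAt

lemma jacobiEps_ellK_eq :
    jacobiEps m (ellK m) = ∫ t in (0:ℝ)..(π/2), Real.sqrt (1 - m * Real.sin t ^ 2) := by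
  have key := intervalIntegral.integral_comp_smul_deriv
    (f := amF m) (f' := fun t => 1 / Real.sqrt (1 - m * Real.sin t ^ 2))
    (g := fun v => dn v m ^ 2) (a := 0) (b := π/2)
    (fun x _ => amF_hasDerivAt hm0 hm1 x) (g_cont hm0 hm1).continuousOn
    (dn_sq_cont hm0 hm1)
  rw [amF_zero] at key
  have hf : amF m (π/2) = ellK m := rfl
  rw [hf] at key
  have heq : ∀ x : ℝ, (1 / Real.sqrt (1 - m * Real.sin x ^ 2)) •
      ((fun v => dn v m ^ 2) ∘ amF m) x = Real.sqrt (1 - m * Real.sin x ^ 2) := by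
    intro x
    have h1 : dn (amF m x) m ^ 2 = 1 - m * Real.sin x ^ 2 := by
      rw [dn_sq hm0 hm1]
      unfold sn
      rw [am_amF hm0 hm1]
    simp only [Function.comp_apply, smul_eq_mul, h1]
    rw [one_div, inv_mul_eq_div, Real.div_sqrt]
  unfold jacobiEps
  rw [show (∫ v in (0:ℝ)..ellK m, dn v m ^ 2) = ∫ x in (0:ℝ)..ellK m, (fun v => dn v m ^ 2) x from rfl, ← key]
  apply intervalIntegral.integral_congr
  intro x _
  exact heq x

end eps

section kbounds
variable {k : ℝ} (hk0 : 0 < k) (hk1 : k < 1)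
include hk0 hk1

lemma ellE_bounds :
    1 ≤ (∫ t in (0:ℝ)..(π/2), Real.sqrt (1 - (1-k^2) * Real.sin t ^ 2)) ∧
    (∫ t in (0:ℝ)..(π/2), Real.sqrt (1 - (1-k^2) * Real.sin t ^ 2)) ≤ 1 + k * (π/2) := by
  have hπ : (0:ℝ) ≤ π/2 := by positivity
  have hconts : Continuous (fun t : ℝ => Real.sqrt (1 - (1-k^2) * Real.sin t ^ 2)) :=
    Real.continuous_sqrt.comp (by continuity)
  have hlow : ∀ t ∈ Set.Icc (0:ℝ) (π/2), Real.cos t ≤ Real.sqrt (1 - (1-k^2) * Real.sin t ^ 2) := by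
    intro t ht
    have hcos : 0 ≤ Real.cos t := Real.cos_nonneg_of_mem_Icc ⟨by linarith [ht.1, Real.pi_pos], ht.2⟩
    have hden : (0:ℝ) ≤ 1 - (1-k^2) * Real.sin t ^ 2 := by
      nlinarith [Real.sin_sq_le_one t, sq_nonneg (Real.sin t)]
    rw [Real.le_sqrt hcos hden]
    have := Real.sin_sq_add_cos_sq t
    nlinarith [sq_nonneg (Real.sin t), sq_nonneg k]
  have hupp : ∀ t ∈ Set.Icc (0:ℝ) (π/2),
      Real.sqrt (1 - (1-k^2) * Real.sin t ^ 2) ≤ Real.cos t + k := by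
    intro t ht
    have hcos : 0 ≤ Real.cos t := Real.cos_nonneg_of_mem_Icc ⟨by linarith [ht.1, Real.pi_pos], ht.2⟩
    have h1 : 1 - (1-k^2) * Real.sin t ^ 2 ≤ (Real.cos t + k) ^ 2 := by
      have := Real.sin_sq_add_cos_sq t
      nlinarith [Real.sin_sq_le_one t, sq_nonneg (Real.sin t)]
    calc Real.sqrt (1 - (1-k^2) * Real.sin t ^ 2) ≤ Real.sqrt ((Real.cos t + k)^2) :=
        Real.sqrt_le_sqrt h1
    _ = Real.cos t + k := Real.sqrt_sq (by linarith)
  constructor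
  · have : (∫ t in (0:ℝ)..(π/2), Real.cos t) ≤
        ∫ t in (0:ℝ)..(π/2), Real.sqrt (1 - (1-k^2) * Real.sin t ^ 2) := by
      apply integral_mono_on hπ (Real.continuous_cos.intervalIntegrable 0 _)
        (hconts.intervalIntegrable 0 _) hlow
    rwa [integral_cos, Real.sin_pi_div_two, Real.sin_zero, sub_zero] at this
  · have : (∫ t in (0:ℝ)..(π/2), Real.sqrt (1 - (1-k^2) * Real.sin t ^ 2)) ≤
        ∫ t in (0:ℝ)..(π/2), (Real.cos t + k) := by
      apply integral_mono_on hπ (hconts.intervalIntegrable 0 _)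
        ((Real.continuous_cos.add continuous_const).intervalIntegrable 0 _) hupp
    rw [integral_add (Real.continuous_cos.intervalIntegrable 0 _)
      (_root_.intervalIntegrable_const), integral_cos, Real.sin_pi_div_two, Real.sin_zero,
      intervalIntegral.integral_const] at this
    simp only [smul_eq_mul, sub_zero] at this
    linarith [this, (by ring : (π/2 - 0) * k = k * (π/2))]
  
lemma ellK'_le : ellK (1 - k^2) ≤ (π/2) / k := by
  have hπ : (0:ℝ) ≤ π/2 := by positivity
  have hm0 : (0:ℝ) ≤ 1 - k^2 := by nlinarith
  have hm1 : 1 - k^2 < 1 := by nlinarith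
  have hb : ∀ t : ℝ, 1 / Real.sqrt (1 - (1-k^2) * Real.sin t ^ 2) ≤ 1/k := by
    intro t
    have h1 : k^2 ≤ 1 - (1-k^2) * Real.sin t ^ 2 := by
      nlinarith [Real.sin_sq_le_one t, sq_nonneg (Real.sin t)]
    have h2 : k ≤ Real.sqrt (1 - (1-k^2) * Real.sin t ^ 2) := by
      rw [Real.le_sqrt hk0.le (by nlinarith [Real.sin_sq_le_one t, sq_nonneg (Real.sin t)])]
      exact h1
    exact one_div_le_one_div_of_le hk0 h2
  have : ellK (1 - k^2) ≤ ∫ _t in (0:ℝ)..(π/2), 1/k := by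
    apply integral_mono hπ (g_intble hm0 hm1 0 _) (by simp [_root_.intervalIntegrable_const])
    intro t; exact hb t
  simpa [div_eq_mul_inv, mul_comm] using this

end kbounds


lemma Hh_eq (k u : ℝ) (hK : ellK (1-k^2) ≠ 0) :
    Hh k u = (1/π) * (ellK (1-k^2) * (jacobiEps (k^2) (u/2) - u/2) +
      jacobiEps (1-k^2) (ellK (1-k^2)) * (u/2)) := by
  unfold Hh
  by_cases hπ : π = 0
  · simp [hπ]
  · field_simp
    ring


set_option maxHeartbeats 400000 in
/-- The probability that an edge of rhombus half-angle `θ̄` occurs in the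
high-temperature polygon expansion of the Z-invariant Ising model with modulus `k`
converges, as `k → 0⁺`, to the critical value `1/2 - (π-2θ̄)/(2π cos θ̄)`:
`1/2 - (1 - 2H(2θ(k)|k))/(2 cn(θ(k)|k)) → 1/2 - (π-2θ̄)/(2π cos θ̄)`,
where `θ(k) = θ̄·2K(k)/π`. -/
theorem edge_probability_critical_limit (θbar : ℝ) (hθ : θbar ∈ Set.Ioo 0 (π / 2)) :
    Filter.Tendsto
      (fun k : ℝ => 1 / 2 -
        (1 - 2 * Hh k (2 * (θbar * (2 * ellK (k ^ 2)) / π))) /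
          (2 * cn (θbar * (2 * ellK (k ^ 2)) / π) (k ^ 2)))
      (nhdsWithin 0 (Set.Ioi 0))
      (nhds (1 / 2 - (π - 2 * θbar) / (2 * π * Real.cos θbar))) := by

  obtain ⟨hθ0, hθπ⟩ := hθ
  have hπ : (0:ℝ) < π := Real.pi_pos
  have hcos : 0 < Real.cos θbar := Real.cos_pos_of_mem_Ioo ⟨by linarith, hθπ⟩
  set l := nhdsWithin (0:ℝ) (Set.Ioi 0) with hl
  have hev : ∀ᶠ k in l, 0 < k ∧ k < 1 := by
    have : Set.Ioo (0:ℝ) 1 ∈ l := Ioo_mem_nhdsGT_of_mem (by norm_num : (0:ℝ) ∈ Set.Ico (0:ℝ) 1)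
    filter_upwards [this] with k hk
    exact ⟨hk.1, hk.2⟩
  have hk0 : Tendsto (fun k : ℝ => k) l (𝓝 0) := tendsto_id.mono_left nhdsWithin_le_nhds
  -- sqrt(1-k²) → 1
  have hsq : Tendsto (fun k : ℝ => Real.sqrt (1 - k^2)) l (𝓝 1) := by
    have hc : ContinuousAt (fun k : ℝ => Real.sqrt (1 - k^2)) 0 :=
      Real.continuous_sqrt.continuousAt.comp (by fun_prop)
    have := hc.tendsto.comp hk0
    simpa [Function.comp_def] using this
  -- ellK (k²) → π/2
  have hK : Tendsto (fun k : ℝ => ellK (k^2)) l (𝓝 (π/2)) := by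
    have hupT : Tendsto (fun k : ℝ => (π/2) / Real.sqrt (1 - k^2)) l (𝓝 (π/2)) := by
      have := (tendsto_const_nhds (x := π/2) (f := l)).div hsq one_ne_zero
      simpa [Pi.div_def] using this
    apply tendsto_of_tendsto_of_tendsto_of_le_of_le' tendsto_const_nhds hupT
    · filter_upwards [hev] with k hk
      exact (ellK_bounds (by positivity) (by nlinarith [hk.1, hk.2])).1
    · filter_upwards [hev] with k hk
      exact (ellK_bounds (by positivity) (by nlinarith [hk.1, hk.2])).2
  -- θk → θbar
  have hθk : Tendsto (fun k : ℝ => θbar * (2 * ellK (k^2)) / π) l (𝓝 θbar) := by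
    have := ((hK.const_mul 2).const_mul θbar).div_const π
    have he : θbar * (2 * (π/2)) / π = θbar := by field_simp
    rwa [he] at this
  -- eventually θk > 0
  have hθkpos : ∀ᶠ k in l, 0 < θbar * (2 * ellK (k^2)) / π := by
    filter_upwards [hev] with k hk
    have := (ellK_bounds (show (0:ℝ) ≤ k^2 by positivity)
      (by nlinarith [hk.1, hk.2] : k^2 < 1)).1
    have h2 : 0 < ellK (k^2) := by linarith [hπ]
    positivity
  -- am → θbar
  have ham : Tendsto (fun k : ℝ => am (k^2) (θbar * (2 * ellK (k^2)) / π)) l (𝓝 θbar) := by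
    have hlowT : Tendsto (fun k : ℝ => Real.sqrt (1 - k^2) * (θbar * (2 * ellK (k^2)) / π))
        l (𝓝 θbar) := by
      have := hsq.mul hθk
      simpa using this
    apply tendsto_of_tendsto_of_tendsto_of_le_of_le' hlowT hθk
    · filter_upwards [hev, hθkpos] with k hk hpos
      exact (am_bounds (by positivity) (by nlinarith [hk.1, hk.2]) hpos.le).1
    · filter_upwards [hev, hθkpos] with k hk hpos
      exact (am_bounds (by positivity) (by nlinarith [hk.1, hk.2]) hpos.le).2
  -- cn → cos θbar
  have hcn : Tendsto (fun k : ℝ => cn (θbar * (2 * ellK (k^2)) / π) (k^2)) l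
      (𝓝 (Real.cos θbar)) := (Real.continuous_cos.tendsto θbar).comp ham
  -- E' → 1
  have hE' : Tendsto (fun k : ℝ => jacobiEps (1 - k^2) (ellK (1 - k^2))) l (𝓝 1) := by
    have hupT : Tendsto (fun k : ℝ => 1 + k * (π/2)) l (𝓝 1) := by
      have := (hk0.mul_const (π/2)).const_add 1
      simpa using this
    apply tendsto_of_tendsto_of_tendsto_of_le_of_le' tendsto_const_nhds hupT
    · filter_upwards [hev] with k hk
      rw [jacobiEps_ellK_eq (by nlinarith [hk.1, hk.2] : (0:ℝ) ≤ 1 - k^2)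
        (by nlinarith [hk.1, hk.2] : 1 - k^2 < 1)]
      exact (ellE_bounds hk.1 hk.2).1
    · filter_upwards [hev] with k hk
      rw [jacobiEps_ellK_eq (by nlinarith [hk.1, hk.2] : (0:ℝ) ≤ 1 - k^2)
        (by nlinarith [hk.1, hk.2] : 1 - k^2 < 1)]
      exact (ellE_bounds hk.1 hk.2).2
  -- k² K' → 0
  have hkK' : Tendsto (fun k : ℝ => k^2 * ellK (1 - k^2)) l (𝓝 0) := by
    have hupT : Tendsto (fun k : ℝ => k * (π/2)) l (𝓝 0) := by
      have := hk0.mul_const (π/2)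
      simpa using this
    apply tendsto_of_tendsto_of_tendsto_of_le_of_le' tendsto_const_nhds hupT
    · filter_upwards [hev] with k hk
      have := (ellK_bounds (by nlinarith [hk.1, hk.2] : (0:ℝ) ≤ 1 - k^2)
        (by nlinarith [hk.1, hk.2] : 1 - k^2 < 1)).1
      have h2 : 0 < ellK (1 - k^2) := by linarith
      positivity
    · filter_upwards [hev] with k hk
      have h1 := ellK'_le hk.1 hk.2
      have h2 : k^2 * ellK (1 - k^2) ≤ k^2 * ((π/2)/k) := by
        apply mul_le_mul_of_nonneg_left h1 (by positivity)
      calc k^2 * ellK (1 - k^2) ≤ k^2 * ((π/2)/k) := h2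
      _ = k * (π/2) := by field_simp [hk.1.ne']
  -- A := K' (Eps - θk) → 0
  have hA : Tendsto (fun k : ℝ => ellK (1 - k^2) *
      (jacobiEps (k^2) (θbar * (2 * ellK (k^2)) / π) - θbar * (2 * ellK (k^2)) / π))
      l (𝓝 0) := by
    have hlowT : Tendsto (fun k : ℝ => -(k^2 * ellK (1 - k^2) *
        (θbar * (2 * ellK (k^2)) / π))) l (𝓝 0) := by
      have := (hkK'.mul hθk).neg
      simpa using this
    apply tendsto_of_tendsto_of_tendsto_of_le_of_le' hlowT tendsto_const_nhds
    · filter_upwards [hev, hθkpos] with k hk hpos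
      have hb := jacobiEps_bounds (show (0:ℝ) ≤ k^2 by positivity)
        (by nlinarith [hk.1, hk.2] : k^2 < 1) hpos.le
      have hKpos : 0 ≤ ellK (1 - k^2) := by
        have := (ellK_bounds (by nlinarith [hk.1, hk.2] : (0:ℝ) ≤ 1 - k^2)
          (by nlinarith [hk.1, hk.2] : 1 - k^2 < 1)).1
        linarith
      nlinarith [hb.1, hb.2]
    · filter_upwards [hev, hθkpos] with k hk hpos
      have hb := jacobiEps_bounds (show (0:ℝ) ≤ k^2 by positivity)
        (by nlinarith [hk.1, hk.2] : k^2 < 1) hpos.le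
      have hKpos : 0 ≤ ellK (1 - k^2) := by
        have := (ellK_bounds (by nlinarith [hk.1, hk.2] : (0:ℝ) ≤ 1 - k^2)
          (by nlinarith [hk.1, hk.2] : 1 - k^2 < 1)).1
        linarith
      nlinarith [hb.2]
  -- Hh → θbar / π
  have hHh : Tendsto (fun k : ℝ => Hh k (2 * (θbar * (2 * ellK (k^2)) / π))) l
      (𝓝 (θbar / π)) := by
    have heq : ∀ᶠ k in l, (1/π) * (ellK (1 - k^2) *
        (jacobiEps (k^2) (θbar * (2 * ellK (k^2)) / π) - θbar * (2 * ellK (k^2)) / π) +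
        jacobiEps (1 - k^2) (ellK (1 - k^2)) * (θbar * (2 * ellK (k^2)) / π)) =
        Hh k (2 * (θbar * (2 * ellK (k^2)) / π)) := by
      filter_upwards [hev] with k hk
      have hKpos : 0 < ellK (1 - k^2) := by
        have := (ellK_bounds (by nlinarith [hk.1, hk.2] : (0:ℝ) ≤ 1 - k^2)
          (by nlinarith [hk.1, hk.2] : 1 - k^2 < 1)).1
        linarith
      have h2 : 2 * (θbar * (2 * ellK (k^2)) / π) / 2 = θbar * (2 * ellK (k^2)) / π := by ring
      rw [Hh_eq k _ hKpos.ne', h2]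
    have hT : Tendsto (fun k : ℝ => (1/π) * (ellK (1 - k^2) *
        (jacobiEps (k^2) (θbar * (2 * ellK (k^2)) / π) - θbar * (2 * ellK (k^2)) / π) +
        jacobiEps (1 - k^2) (ellK (1 - k^2)) * (θbar * (2 * ellK (k^2)) / π))) l
        (𝓝 (θbar / π)) := by
      have := (hA.add (hE'.mul hθk)).const_mul (1/π)
      have he : (1/π) * (0 + 1 * θbar) = θbar / π := by ring
      rwa [he] at this
    exact hT.congr' heq
  -- assemble
  have hfin : Tendsto (fun k : ℝ => 1 / 2 -
      (1 - 2 * Hh k (2 * (θbar * (2 * ellK (k ^ 2)) / π))) /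
        (2 * cn (θbar * (2 * ellK (k ^ 2)) / π) (k ^ 2))) l
      (𝓝 (1/2 - (1 - 2 * (θbar/π)) / (2 * Real.cos θbar))) := by
    apply Tendsto.sub tendsto_const_nhds
    apply Tendsto.div (tendsto_const_nhds.sub (hHh.const_mul 2)) (hcn.const_mul 2)
    positivity
  have he : 1/2 - (1 - 2 * (θbar/π)) / (2 * Real.cos θbar) =
      1 / 2 - (π - 2 * θbar) / (2 * π * Real.cos θbar) := by
    have hc := hcos.ne'
    field_simp
  rwa [he] at hfin
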